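/- Vanishing tail sums at segment ends (Lemma 'lim n t → T⁻'). Suppose that for some constant L̄ ≥ 0 and every τ > 0, limsup_{n→∞} sup_{−τ ≤ t₁ ≤ t₂ ≤ τ} |∑_{i=m(t(n)+t₁)}^{m(t(n)+t₂)−1} α(i)·(L(Y_{i+1}) − L̄)| = 0, and that for some vector h₀ ∈ ℝ^d and every τ > 0 the analogous condition holds with L(Y_{i+1}) − L̄ replaced by H(0, Y_{i+1}) − h₀. Then lim_{n→∞} lim_{t→T⁻} ∑_{i=m(T_n+t)}^{m(T_{n+1})−1} α(i)·L(Y_{i+1}) = 0 and lim_{n→∞} lim_{t→T⁻} ‖∑_{i=m(T_n+t)}^{m(T_{n+1})−1} α(i)·H(0, Y_{i+1})‖ = 0. -/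
import Mathlib

open Filter

lemma tail_aux {F : Type*} [NormedAddCommGroup F] [NormedSpace ℝ F]
    (α : ℕ → ℝ) (hα_pos : ∀ n, 0 < α n)
    (hα_to0 : Tendsto α atTop (nhds 0))
    (t : ℕ → ℝ) (ht : ∀ n, t n = ∑ i ∈ Finset.range n, α i)
    (m : ℝ → ℕ)
    (hm_le : ∀ s : ℝ, 0 ≤ s → t (m s) ≤ s)
    (hm_max : ∀ s : ℝ, 0 ≤ s → ∀ i : ℕ, t i ≤ s → i ≤ m s)
    (T : ℝ) (hT : 0 < T)
    (Tseq : ℕ → ℝ) (hTseq0 : Tseq 0 = 0)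
    (hTseq : ∀ n, Tseq (n + 1) = t (m (Tseq n + T) + 1))
    (w : ℕ → F) (wbar : F)
    (hrate : ∀ τ : ℝ, 0 < τ → ∀ ε : ℝ, 0 < ε → ∃ N : ℕ, ∀ n ≥ N,
      ∀ t₁ t₂ : ℝ, -τ ≤ t₁ → t₁ ≤ t₂ → t₂ ≤ τ →
        ‖∑ i ∈ Finset.Ico (m (t n + t₁)) (m (t n + t₂)), α i • (w i - wbar)‖ ≤ ε) :
    ∃ ℓ : ℕ → F, (∀ n : ℕ, Tendsto (fun s : ℝ =>
        ∑ i ∈ Finset.Ico (m (Tseq n + s)) (m (Tseq (n + 1))), α i • w i)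
      (nhdsWithin T (Set.Iio T)) (nhds (ℓ n))) ∧ Tendsto ℓ atTop (nhds 0) := by
  have t0 : t 0 = 0 := by simp [ht]
  have tmono : StrictMono t := strictMono_nat_of_lt_succ (fun n => by
    simp only [ht, Finset.sum_range_succ]
    exact lt_add_of_pos_right _ (hα_pos n))
  have tnn : ∀ n, 0 ≤ t n := fun n => by
    rw [ht]; exact Finset.sum_nonneg fun i _ => (hα_pos i).le
  have m_t : ∀ j, m (t j) = j := fun j =>
    le_antisymm (tmono.le_iff_le.mp (hm_le (t j) (tnn j)))
      (hm_max (t j) (tnn j) j le_rfl)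
  have m_mono : ∀ s s' : ℝ, 0 ≤ s → s ≤ s' → m s ≤ m s' := fun s s' hs hss' =>
    hm_max s' (hs.trans hss') _ ((hm_le s hs).trans hss')
  have Tnn : ∀ n, 0 ≤ Tseq n := by
    intro n
    cases n with
    | zero => rw [hTseq0]
    | succ n => rw [hTseq n]; exact tnn _
  set M : ℕ → ℕ := fun n => m (Tseq n + T) with hM
  have Snn : ∀ n, 0 < Tseq n + T := fun n => add_pos_of_nonneg_of_pos (Tnn n) hT
  have hM1 : ∀ n, Tseq n + T < t (M n + 1) := by
    intro n
    by_contra h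
    push_neg at h
    have h2 : M n + 1 ≤ M n := hm_max (Tseq n + T) (Snn n).le (M n + 1) h
    omega
  have hTnext : ∀ n, Tseq (n + 1) = t (M n + 1) := hTseq
  have hmTnext : ∀ n, m (Tseq (n + 1)) = M n + 1 := fun n => by
    rw [hTnext n, m_t]
  have hMgrow : ∀ n, M n + 1 ≤ M (n + 1) := by
    intro n
    have h1 : m (Tseq (n + 1)) ≤ M (n + 1) :=
      m_mono _ _ (Tnn (n + 1)) (le_add_of_nonneg_right hT.le)
    rw [hmTnext n] at h1
    exact h1
  have hMge : ∀ n, n ≤ M n := by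
    intro n
    induction n with
    | zero => exact Nat.zero_le _
    | succ n ih => have := hMgrow n; omega
  -- k n : the eventual value of m just below Tseq n + T
  set k : ℕ → ℕ := fun n => if t (M n) = Tseq n + T then M n - 1 else M n with hk
  have hkdef : ∀ n, k n = if t (M n) = Tseq n + T then M n - 1 else M n := fun n => rfl
  have hMpos : ∀ n, t (M n) = Tseq n + T → 1 ≤ M n := by
    intro n h
    rcases Nat.eq_zero_or_pos (M n) with h0' | h0'
    · rw [h0', t0] at h; exact absurd h.symm (ne_of_gt (Snn n))
    · exact h0'
  have hkM : ∀ n, k n ≤ M n ∧ M n ≤ k n + 1 := by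
    intro n
    rw [hkdef]
    split
    · next h => have := hMpos n h; omega
    · omega
  have htk_lt : ∀ n, t (k n) < Tseq n + T := by
    intro n
    rw [hkdef]
    split
    · next h =>
      have h1 := hMpos n h
      have : t (M n - 1) < t (M n) := tmono (by omega)
      rw [h] at this; exact this
    · next h => exact lt_of_le_of_ne (hm_le _ (Snn n).le) h
  have key : ∀ n, ∀ x : ℝ, t (k n) ≤ x → x < Tseq n + T → m x = k n := by
    intro n x hx1 hx2
    have hxnn : 0 ≤ x := (tnn (k n)).trans hx1
    have hge : k n ≤ m x := hm_max x hxnn (k n) hx1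
    have hle : m x ≤ k n := by
      rw [hkdef]
      split
      · next h =>
        have h1 := hMpos n h
        have hlt : m x < M n := by
          by_contra hc
          push_neg at hc
          have : t (M n) ≤ t (m x) := tmono.monotone hc
          have := this.trans (hm_le x hxnn)
          rw [h] at this
          linarith
        omega
      · next h =>
        exact m_mono x (Tseq n + T) hxnn hx2.le
    omega
  refine ⟨fun n => ∑ i ∈ Finset.Ico (k n) (M n + 1), α i • w i, fun n => ?_, ?_⟩
  · -- eventual constancy
    have hev : (fun s : ℝ =>
        ∑ i ∈ Finset.Ico (m (Tseq n + s)) (m (Tseq (n + 1))), α i • w i)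
        =ᶠ[nhdsWithin T (Set.Iio T)] fun _ => ∑ i ∈ Finset.Ico (k n) (M n + 1), α i • w i := by
      have hc : t (k n) - Tseq n < T := by linarith [htk_lt n]
      filter_upwards [Ioo_mem_nhdsLT_of_mem (show T ∈ Set.Ioc (t (k n) - Tseq n) T from ⟨hc, le_rfl⟩)] with s hs
      have h1 : m (Tseq n + s) = k n := key n _ (by linarith [hs.1]) (by linarith [hs.2])
      rw [h1, hmTnext n]
    exact Tendsto.congr' hev.symm tendsto_const_nhds
  · -- smallness
    rw [NormedAddCommGroup.tendsto_nhds_zero]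
    intro ε hε
    rw [eventually_atTop]
    obtain ⟨N₁, hN₁⟩ := hrate T hT (ε / 4) (by linarith)
    set δ : ℝ := min (T / 2) (ε / (4 * (‖wbar‖ + 1))) with hδ
    have hδpos : 0 < δ := lt_min (by linarith) (by positivity)
    obtain ⟨N₂, hN₂⟩ := (Metric.tendsto_atTop.mp hα_to0) δ hδpos
    refine ⟨max N₁ (N₂ + 1), fun n hn => ?_⟩
    have hnN₁ : N₁ ≤ n := le_of_max_le_left hn
    have hnN₂ : N₂ + 1 ≤ n := le_of_max_le_right hn
    have hMn : N₂ + 1 ≤ M n := le_trans hnN₂ (hMge n)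
    have hkn : N₂ ≤ k n := by have := (hkM n).2; omega
    have hαsmall : ∀ i ∈ Finset.Ico (k n) (M n + 1), α i ≤ δ := by
      intro i hi
      have : N₂ ≤ i := le_trans hkn (Finset.mem_Ico.mp hi).1
      have := hN₂ i this
      rw [Real.dist_eq, sub_zero, abs_of_pos (hα_pos i)] at this
      exact this.le
    have hsum_nn : 0 ≤ ∑ i ∈ Finset.Ico (k n) (M n + 1), α i :=
      Finset.sum_nonneg fun i _ => (hα_pos i).le
    have hsum_le : ∑ i ∈ Finset.Ico (k n) (M n + 1), α i ≤ 2 * δ := by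
      calc ∑ i ∈ Finset.Ico (k n) (M n + 1), α i
          ≤ ∑ _i ∈ Finset.Ico (k n) (M n + 1), δ := Finset.sum_le_sum hαsmall
        _ = (Finset.Ico (k n) (M n + 1)).card • δ := by rw [Finset.sum_const]
        _ = ((M n + 1 - k n : ℕ) : ℝ) * δ := by rw [Nat.card_Ico, nsmul_eq_mul]
        _ ≤ 2 * δ := by
            apply mul_le_mul_of_nonneg_right _ hδpos.le
            have := (hkM n).2
            have h2 : (M n + 1 - k n : ℕ) ≤ 2 := by omega
            exact_mod_cast h2
    have htdiff : t (M n + 1) - t (k n) = ∑ i ∈ Finset.Ico (k n) (M n + 1), α i := by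
      rw [ht, ht, Finset.sum_Ico_eq_sub _ (by have := (hkM n).1; omega)]
    -- apply hrate at index M n + 1 with t₁ = t (k n) - t (M n + 1), t₂ = 0
    have ht₁ : -T ≤ t (k n) - t (M n + 1) := by
      have : t (M n + 1) - t (k n) ≤ 2 * δ := htdiff ▸ hsum_le
      have hδT : 2 * δ ≤ T := by
        have := min_le_left (T / 2) (ε / (4 * (‖wbar‖ + 1)))
        rw [← hδ] at this; linarith
      linarith
    have ht₁0 : t (k n) - t (M n + 1) ≤ 0 := by
      have : t (k n) ≤ t (M n + 1) := tmono.monotone (by have := (hkM n).1; omega)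
      linarith
    have happ := hN₁ (M n + 1) (le_trans hnN₁ (by have := hMge n; omega))
      (t (k n) - t (M n + 1)) 0 ht₁ ht₁0 hT.le
    rw [add_zero, m_t] at happ
    have harg : t (M n + 1) + (t (k n) - t (M n + 1)) = t (k n) := by ring
    rw [harg, m_t] at happ
    -- decompose
    have hdecomp : ∑ i ∈ Finset.Ico (k n) (M n + 1), α i • w i
        = (∑ i ∈ Finset.Ico (k n) (M n + 1), α i • (w i - wbar))
          + (∑ i ∈ Finset.Ico (k n) (M n + 1), α i) • wbar := by
      rw [Finset.sum_smul]
      rw [← Finset.sum_add_distrib]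
      congr 1
      ext i
      rw [smul_sub]
      abel
    rw [hdecomp]
    calc ‖(∑ i ∈ Finset.Ico (k n) (M n + 1), α i • (w i - wbar))
          + (∑ i ∈ Finset.Ico (k n) (M n + 1), α i) • wbar‖
        ≤ ‖∑ i ∈ Finset.Ico (k n) (M n + 1), α i • (w i - wbar)‖
          + ‖(∑ i ∈ Finset.Ico (k n) (M n + 1), α i) • wbar‖ := norm_add_le _ _
      _ ≤ ε / 4 + (2 * δ) * ‖wbar‖ := by
          apply add_le_add happ
          rw [norm_smul, Real.norm_eq_abs, abs_of_nonneg hsum_nn]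
          exact mul_le_mul_of_nonneg_right hsum_le (norm_nonneg _)
      _ < ε := by
          have hδ2 : δ ≤ ε / (4 * (‖wbar‖ + 1)) := min_le_right _ _
          have hw : 0 ≤ ‖wbar‖ := norm_nonneg _
          have : (2 * δ) * ‖wbar‖ ≤ 2 * (ε / (4 * (‖wbar‖ + 1))) * (‖wbar‖ + 1) := by
            apply mul_le_mul (by linarith) (by linarith) hw (by positivity)
          have h4 : 2 * (ε / (4 * (‖wbar‖ + 1))) * (‖wbar‖ + 1) = ε / 2 := by
            field_simp; ring
          rw [h4] at this
          linarith

theorem vanishing_tail_sums_at_segment_ends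
    {E : Type*} [NormedAddCommGroup E] [NormedSpace ℝ E] [FiniteDimensional ℝ E]
    [Nontrivial E]
    {𝓨 : Type*}
    (α : ℕ → ℝ)
    (hα_pos : ∀ n, 0 < α n)
    (hα_anti : ∀ n, α (n + 1) ≤ α n)
    (hα_div : Tendsto (fun n => ∑ i ∈ Finset.range n, α i) atTop atTop)
    (hα_to0 : Tendsto α atTop (nhds 0))
    (t : ℕ → ℝ) (ht : ∀ n, t n = ∑ i ∈ Finset.range n, α i)
    (m : ℝ → ℕ)
    (hm_le : ∀ s : ℝ, 0 ≤ s → t (m s) ≤ s)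
    (hm_max : ∀ s : ℝ, 0 ≤ s → ∀ i : ℕ, t i ≤ s → i ≤ m s)
    (hm_neg : ∀ s : ℝ, s < 0 → m s = 0)
    (T : ℝ) (hT : 0 < T)
    (Tseq : ℕ → ℝ) (hTseq0 : Tseq 0 = 0)
    (hTseq : ∀ n, Tseq (n + 1) = t (m (Tseq n + T) + 1))
    (Y : ℕ → 𝓨) (H : E → 𝓨 → E)
    (L : 𝓨 → ℝ) (hL_nonneg : ∀ y, 0 ≤ L y)
    (Lbar : ℝ) (hLbar : 0 ≤ Lbar)
    (hrateL : ∀ τ : ℝ, 0 < τ → ∀ ε : ℝ, 0 < ε → ∃ N : ℕ, ∀ n ≥ N,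
      ∀ t₁ t₂ : ℝ, -τ ≤ t₁ → t₁ ≤ t₂ → t₂ ≤ τ →
        |∑ i ∈ Finset.Ico (m (t n + t₁)) (m (t n + t₂)),
            α i * (L (Y (i + 1)) - Lbar)| ≤ ε)
    (h0 : E)
    (hrate0 : ∀ τ : ℝ, 0 < τ → ∀ ε : ℝ, 0 < ε → ∃ N : ℕ, ∀ n ≥ N,
      ∀ t₁ t₂ : ℝ, -τ ≤ t₁ → t₁ ≤ t₂ → t₂ ≤ τ →
        ‖∑ i ∈ Finset.Ico (m (t n + t₁)) (m (t n + t₂)),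
            α i • (H 0 (Y (i + 1)) - h0)‖ ≤ ε) :
    (∃ ℓ : ℕ → ℝ, (∀ n : ℕ, Tendsto (fun s : ℝ =>
        ∑ i ∈ Finset.Ico (m (Tseq n + s)) (m (Tseq (n + 1))), α i * L (Y (i + 1)))
      (nhdsWithin T (Set.Iio T)) (nhds (ℓ n))) ∧ Tendsto ℓ atTop (nhds 0)) ∧
    (∃ ℓ : ℕ → ℝ, (∀ n : ℕ, Tendsto (fun s : ℝ =>
        ‖∑ i ∈ Finset.Ico (m (Tseq n + s)) (m (Tseq (n + 1))), α i • H 0 (Y (i + 1))‖)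
      (nhdsWithin T (Set.Iio T)) (nhds (ℓ n))) ∧ Tendsto ℓ atTop (nhds 0)) := by
  obtain ⟨ℓ₁, hℓ₁, hℓ₁0⟩ := tail_aux α hα_pos hα_to0 t ht m hm_le hm_max T hT Tseq
    hTseq0 hTseq (fun i => L (Y (i + 1))) Lbar (by
      intro τ hτ ε hε
      obtain ⟨N, hN⟩ := hrateL τ hτ ε hε
      exact ⟨N, fun n hn t₁ t₂ h1 h2 h3 => by
        simpa [smul_eq_mul, Real.norm_eq_abs] using hN n hn t₁ t₂ h1 h2 h3⟩)
  obtain ⟨ℓ₂, hℓ₂, hℓ₂0⟩ := tail_aux α hα_pos hα_to0 t ht m hm_le hm_max T hT Tseq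
    hTseq0 hTseq (fun i => H 0 (Y (i + 1))) h0 hrate0
  refine ⟨⟨ℓ₁, fun n => ?_, hℓ₁0⟩, ⟨fun n => ‖ℓ₂ n‖, fun n => (hℓ₂ n).norm,
    by simpa using hℓ₂0.norm⟩⟩
  simpa [smul_eq_mul] using hℓ₁ n
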